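/- Let P be a real symmetric 2×2 matrix, q ∈ ℝ², and r > 0, and consider f(x) = ½xᵀPx + qᵀx restricted to the circle {x ∈ ℝ² : ‖x‖₂ = r}. Then either f is constant on the circle, or there are at most 2 points of the circle that are local minimizers of f on the circle, and at most 2 points of the circle that are local maximizers of f on the circle. -/

import Mathlib

open Matrix Complex
open scoped Classical

noncomputable section

/-- Euclidean norm of a vector in `ℝⁿ`. -/
def euclNorm {n : ℕ} (x : Fin n → ℝ) : ℝ := Real.sqrt (x ⬝ᵥ x)

/-- The quadratic objective `f(x) = ½ xᵀPx + qᵀx`. -/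
def qobj {n : ℕ} (P : Matrix (Fin n) (Fin n) ℝ) (q : Fin n → ℝ) (x : Fin n → ℝ) : ℝ :=
  (1 / 2) * (x ⬝ᵥ P.mulVec x) + q ⬝ᵥ x

/-- The block matrix `M = [[-P, qqᵀ/r²], [I, -P]]`. -/
def trsM {n : ℕ} (P : Matrix (Fin n) (Fin n) ℝ) (q : Fin n → ℝ) (r : ℝ) :
    Matrix (Fin n ⊕ Fin n) (Fin n ⊕ Fin n) ℝ :=
  Matrix.fromBlocks (-P) ((r ^ 2)⁻¹ • Matrix.vecMulVec q q) 1 (-P)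

/-- The complexification of `M`. -/
def trsMC {n : ℕ} (P : Matrix (Fin n) (Fin n) ℝ) (q : Fin n → ℝ) (r : ℝ) :
    Matrix (Fin n ⊕ Fin n) (Fin n ⊕ Fin n) ℂ :=
  (trsM P q r).map Complex.ofReal

/-- `μ ∈ ℂ` is an eigenvalue of the complex matrix `A`. -/
def IsEig {m : Type*} [Fintype m] (A : Matrix m m ℂ) (μ : ℂ) : Prop :=
  ∃ v : m → ℂ, v ≠ 0 ∧ A.mulVec v = μ • v

/-- The secular function `s(z) = Σᵢ (wᵢᵀq)²/(λᵢ + z)² - r²` on `ℂ`. -/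
def secular {n : ℕ} (lam : Fin n → ℝ) (w : Fin n → Fin n → ℝ) (q : Fin n → ℝ) (r : ℝ)
    (z : ℂ) : ℂ :=
  (∑ i, ((w i ⬝ᵥ q : ℝ) : ℂ) ^ 2 / (((lam i : ℝ) : ℂ) + z) ^ 2) - (r : ℂ) ^ 2

/-- The secular function on `ℝ`. -/
def secularR {n : ℕ} (lam : Fin n → ℝ) (w : Fin n → Fin n → ℝ) (q : Fin n → ℝ) (r : ℝ)
    (t : ℝ) : ℝ :=
  (∑ i, (w i ⬝ᵥ q) ^ 2 / (lam i + t) ^ 2) - r ^ 2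

/-- The derivative of the secular function, `s'(t) = -2 Σᵢ (wᵢᵀq)²/(λᵢ + t)³`. -/
def secularDeriv {n : ℕ} (lam : Fin n → ℝ) (w : Fin n → Fin n → ℝ) (q : Fin n → ℝ)
    (t : ℝ) : ℝ :=
  -2 * ∑ i, (w i ⬝ᵥ q) ^ 2 / (lam i + t) ^ 3

/-- `z` is not a pole of the secular function (the poles are the `-λᵢ` with `wᵢᵀq ≠ 0`). -/
def IsNonpole {n : ℕ} (lam : Fin n → ℝ) (w : Fin n → Fin n → ℝ) (q : Fin n → ℝ) (z : ℂ) : Prop :=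
  ∀ i, w i ⬝ᵥ q ≠ 0 → z ≠ -((lam i : ℝ) : ℂ)

/-- `f` has a zero of order exactly `k` at `z`. -/
def HasZeroOfOrder (f : ℂ → ℂ) (z : ℂ) (k : ℕ) : Prop :=
  ∃ g : ℂ → ℂ, AnalyticAt ℂ g z ∧ g z ≠ 0 ∧ ∀ᶠ u in nhds z, f u = (u - z) ^ k * g u

end

noncomputable section Aux
open Polynomial

-- parametrization surjectivity
lemma circle_param {r : ℝ} (hr : 0 < r) (x : Fin 2 → ℝ) (hx : euclNorm x = r) :
    ∃ t : ℝ, t ∈ Set.Ioc (-Real.pi) Real.pi ∧ x = ![r * Real.cos t, r * Real.sin t] := by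
  have hxx : x 0 ^ 2 + x 1 ^ 2 = r ^ 2 := by
    have h1 : Real.sqrt (x 0 * x 0 + x 1 * x 1) = r := by
      simpa [euclNorm, dotProduct, Fin.sum_univ_two] using hx
    have h2 : x 0 * x 0 + x 1 * x 1 = r ^ 2 := by
      have := Real.sq_sqrt (by nlinarith [sq_nonneg (x 0), sq_nonneg (x 1), mul_self_nonneg (x 0)] :
        (0:ℝ) ≤ x 0 * x 0 + x 1 * x 1)
      rw [h1] at this; linarith [this]
    nlinarith [h2]
  set z : ℂ := ⟨x 0, x 1⟩ with hz
  have habs : ‖z‖ = r := by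
    rw [Complex.norm_def, Complex.normSq_mk]
    rw [show x 0 * x 0 + x 1 * x 1 = r ^ 2 by nlinarith]
    exact Real.sqrt_sq hr.le
  have hz0 : z ≠ 0 := by
    intro h; rw [h] at habs; simp at habs; linarith
  refine ⟨z.arg, ⟨Complex.neg_pi_lt_arg z, Complex.arg_le_pi z⟩, ?_⟩
  have hc := Complex.cos_arg hz0
  have hs := Complex.sin_arg z
  rw [habs] at hc hs
  funext i
  fin_cases i
  · simp [hc]; field_simp; rfl
  · simp [hs]; field_simp; rfl

lemma qobj_pair (P : Matrix (Fin 2) (Fin 2) ℝ) (hP : P.IsSymm) (q : Fin 2 → ℝ) (u v : ℝ) :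
    qobj P q ![u, v] = (1/2) * (P 0 0 * u^2 + 2 * P 0 1 * u * v + P 1 1 * v^2)
      + q 0 * u + q 1 * v := by
  have h10 : P 1 0 = P 0 1 := hP.apply 0 1
  simp [qobj, dotProduct, Matrix.mulVec, Fin.sum_univ_two, h10, Matrix.vecHead, Matrix.vecTail]
  ring

-- G and H
def Gfun (a b c q0 q1 r : ℝ) (t : ℝ) : ℝ :=
  (1/2) * (a * (r * Real.cos t)^2 + 2 * b * (r * Real.cos t) * (r * Real.sin t)
    + c * (r * Real.sin t)^2) + q0 * (r * Real.cos t) + q1 * (r * Real.sin t)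

def Hfun (a b c q0 q1 r : ℝ) (t : ℝ) : ℝ :=
  (c - a) * r^2 * (Real.sin t * Real.cos t)
    + b * r^2 * ((Real.cos t)^2 - (Real.sin t)^2)
    - q0 * r * Real.sin t + q1 * r * Real.cos t

lemma hasDerivAt_G (a b c q0 q1 r t : ℝ) :
    HasDerivAt (Gfun a b c q0 q1 r) (Hfun a b c q0 q1 r t) t := by
  have hc := Real.hasDerivAt_cos t
  have hs := Real.hasDerivAt_sin t
  have h :=
    ((((hc.const_mul r).pow 2).const_mul (a * (1/2))).add
      ((((hc.const_mul r).mul (hs.const_mul r)).const_mul (b))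
        )).add
      ((((hs.const_mul r).pow 2).const_mul (c * (1/2))).add
        (((hc.const_mul r).const_mul q0).add ((hs.const_mul r).const_mul q1)))
  refine HasDerivAt.congr_deriv (HasDerivAt.congr_of_eventuallyEq h (Filter.Eventually.of_forall fun u => ?_)) ?_
  · simp only [Gfun, Pi.add_apply, Pi.mul_apply, Pi.pow_apply]; ring
  · simp only [Hfun]; push_cast; ring



def Hg (K L M N : ℝ) (t : ℝ) : ℝ :=
  2*K*(Real.sin t*Real.cos t) + L*((Real.cos t)^2-(Real.sin t)^2) + M*Real.sin t + N*Real.cos t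

def P4 (K L M N : ℝ) : Polynomial ℂ :=
  C ((L:ℂ) - K*I) * X^4 + C ((N:ℂ) - M*I) * X^3 + C ((N:ℂ) + M*I) * X + C ((L:ℂ) + K*I)

lemma hasDerivAt_G2 (a b c q0 q1 r t : ℝ) :
    HasDerivAt (Gfun a b c q0 q1 r)
      (Hg ((c-a)*r^2/2) (b*r^2) (-(q0*r)) (q1*r) t) t := by
  have h := hasDerivAt_G a b c q0 q1 r t
  convert h using 1
  simp only [Hfun, Hg]
  ring


lemma natDegree_P4 (K L M N : ℝ) : (P4 K L M N).natDegree ≤ 4 := by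
  unfold P4; compute_degree

lemma eval_P4 (K L M N t : ℝ) :
    (P4 K L M N).eval (Complex.exp (t*Complex.I)) =
      2 * ((Hg K L M N t : ℝ) : ℂ) * (Complex.exp (t*Complex.I))^2 := by
  rw [Complex.exp_mul_I, ← Complex.ofReal_cos, ← Complex.ofReal_sin]
  set cc : ℂ := ((Real.cos t : ℝ) : ℂ) with hcc
  set ss : ℂ := ((Real.sin t : ℝ) : ℂ) with hss
  have h1 : cc^2 + ss^2 = 1 := by
    rw [hcc, hss]
    push_cast [← Complex.ofReal_pow]
    exact_mod_cast congrArg (Complex.ofReal) (Real.cos_sq_add_sin_sq t)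
  have hI : Complex.I^2 = -1 := Complex.I_sq
  simp only [P4, Hg, eval_add, eval_mul, eval_pow, eval_C, eval_X]
  push_cast [-Complex.ofReal_sin, -Complex.ofReal_cos]
  set K' : ℂ := (K:ℂ); set L' : ℂ := (L:ℂ); set M' : ℂ := (M:ℂ); set N' : ℂ := (N:ℂ)
  linear_combination
    (-L' - Complex.I*K' + ss*M' - ss*Complex.I*N' - ss^2*L' - ss^2*Complex.I*K'
      - cc*N' - cc*Complex.I*M' - cc^2*L' - cc^2*Complex.I*K') * h1
    + (ss*M' - ss^3*M' + ss^3*Complex.I*N' - ss^3*Complex.I^2*M' + ss^4*L'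
      + ss^4*Complex.I*K' + ss^4*Complex.I^2*L' - ss^4*Complex.I^3*K'
      + cc*ss^2*N' - 3*cc*ss^2*Complex.I*M' + 4*cc*ss^3*Complex.I*L'
      - 4*cc*ss^3*Complex.I^2*K' - 3*cc^2*ss*M' + 4*cc^2*ss^2*L'
      - 6*cc^2*ss^2*Complex.I*K' - 4*cc^3*ss*K') * hI



lemma Hg_allzero_of_five (K L M N : ℝ) (u : Fin 5 → ℝ) (hmono : StrictMono u)
    (hlt : u 4 - u 0 < 2*Real.pi) (hz : ∀ i, Hg K L M N (u i) = 0) :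
    ∀ t, Hg K L M N t = 0 := by
  set p := P4 K L M N with hp
  by_cases hp0 : p = 0
  · intro t
    have h := eval_P4 K L M N t
    rw [← hp, hp0] at h
    simp only [Polynomial.eval_zero] at h
    have hz2 : Complex.exp (t*Complex.I) ^ 2 ≠ 0 := pow_ne_zero _ (Complex.exp_ne_zero _)
    have h2 : ((Hg K L M N t : ℝ):ℂ) * (2 * Complex.exp (t*Complex.I)^2) = 0 := by
      linear_combination -h
    have h3 : (2:ℂ) * Complex.exp (t*Complex.I)^2 ≠ 0 := mul_ne_zero two_ne_zero hz2
    have h4 := (mul_eq_zero.mp h2).resolve_right h3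
    exact_mod_cast h4
  · exfalso
    set z : Fin 5 → ℂ := fun i => Complex.exp (u i * Complex.I) with hzdef
    have hinj : Function.Injective z := by
      intro i j hij
      by_contra hne
      wlog hij' : i < j generalizing i j
      · have hji : j < i := lt_of_le_of_ne (not_lt.mp hij') (Ne.symm hne)
        exact this hij.symm (Ne.symm hne) hji
      · have h1 : u i < u j := hmono hij'
        have h2 : u j - u i < 2*Real.pi := by
          have h3 : u 0 ≤ u i := hmono.monotone (by omega : (0:Fin 5) ≤ i)
          have h4 : u j ≤ u 4 := hmono.monotone (by omega : j ≤ (4:Fin 5))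
          linarith
        rw [hzdef] at hij
        simp only at hij
        obtain ⟨n, hn⟩ := Complex.exp_eq_exp_iff_exists_int.mp hij
        have hn' : (u i : ℂ) = (u j : ℝ) + n * (2*Real.pi) := by
          have := hn
          rw [show ((u j:ℂ)) * Complex.I + n * (2 * (Real.pi:ℂ) * Complex.I)
            = ((u j:ℝ) + n * (2*Real.pi)) * Complex.I by push_cast; ring] at this
          exact mul_right_cancel₀ Complex.I_ne_zero this
        have hnr : u i = u j + (n:ℝ) * (2*Real.pi) := by exact_mod_cast hn'
        have hpi := Real.pi_pos
        rcases lt_trichotomy n 0 with h | h | h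
        · have hn1 : n ≤ -1 := by omega
          have : (n:ℝ) ≤ -1 := by
            have : ((n:ℝ)) ≤ ((-1 : ℤ) : ℝ) := Int.cast_le.mpr hn1
            simpa using this
          nlinarith
        · rw [h] at hnr; simp at hnr; linarith
        · have : (1:ℝ) ≤ (n:ℝ) := by exact_mod_cast h
          nlinarith
    have hroots : ∀ i, z i ∈ p.roots := by
      intro i
      rw [Polynomial.mem_roots hp0]
      have h := eval_P4 K L M N (u i)
      rw [← hp] at h
      simp [Polynomial.IsRoot, hzdef, h, hz i]
    have hcard : (Finset.univ.image z).card = 5 := by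
      rw [Finset.card_image_of_injective _ hinj, Finset.card_univ, Fintype.card_fin]
    have hsub : Finset.univ.image z ⊆ p.roots.toFinset := by
      intro w hw
      simp only [Finset.mem_image] at hw
      obtain ⟨i, _, rfl⟩ := hw
      exact Multiset.mem_toFinset.mpr (hroots i)
    have h5 : 5 ≤ p.roots.toFinset.card := hcard ▸ Finset.card_le_card hsub
    have h4 : p.roots.toFinset.card ≤ 4 :=
      le_trans (Multiset.toFinset_card_le _) (le_trans (Polynomial.card_roots' p) (natDegree_P4 K L M N))
    omega

variable {G : ℝ → ℝ} {K L M N : ℝ}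

lemma const_interval_allzero (hderiv : ∀ t, HasDerivAt G (Hg K L M N t) t)
    {lo hi : ℝ} (hlohi : lo < hi) (hconst : ∀ u ∈ Set.Ioo lo hi, G u = G lo) :
    ∀ t, Hg K L M N t = 0 := by
  have hzero : ∀ u ∈ Set.Ioo lo hi, Hg K L M N u = 0 := by
    intro u hu
    have hev : G =ᶠ[nhds u] (fun _ => G lo) := by
      filter_upwards [Ioo_mem_nhds hu.1 hu.2] with v hv
      exact hconst v hv
    have h1 : HasDerivAt (fun _ : ℝ => G lo) (Hg K L M N u) u :=
      (Filter.EventuallyEq.hasDerivAt_iff hev).mp (hderiv u)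
    exact h1.unique (hasDerivAt_const u (G lo))
  -- pick 5 points
  set d : ℝ := min (hi - lo) 1 with hd
  have hdpos : 0 < d := lt_min (by linarith) one_pos
  set u : Fin 5 → ℝ := fun i => lo + d * ((i:ℝ) + 1) / 6 with hu
  have hmem : ∀ i : Fin 5, u i ∈ Set.Ioo lo hi := by
    intro i
    have hi5 : (i:ℝ) ≤ 4 := by
      have := i.is_lt; exact_mod_cast Nat.lt_succ_iff.mp this
    have h0 : (0:ℝ) ≤ (i:ℝ) := Nat.cast_nonneg _
    constructor
    · simp only [hu]; nlinarith
    · have hd2 : d ≤ hi - lo := min_le_left _ _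
      simp only [hu]; nlinarith
  apply Hg_allzero_of_five K L M N u
  · intro i j hij
    have : (i:ℝ) < (j:ℝ) := by exact_mod_cast hij
    simp only [hu]
    have := hdpos
    nlinarith
  · have e4 : ((4:Fin 5):ℕ) = 4 := rfl
    have e0 : ((0:Fin 5):ℕ) = 0 := rfl
    have hpi : (3:ℝ) < Real.pi := Real.pi_gt_three
    have hd1 : d ≤ 1 := min_le_right _ _
    simp only [hu, e4, e0]
    push_cast
    nlinarith
  · intro i; exact hzero (u i) (hmem i)

lemma between_mins (hderiv : ∀ t, HasDerivAt G (Hg K L M N t) t)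
    {t1 t2 : ℝ} (hlt : t1 < t2) (h1 : IsLocalMin G t1) (h2 : IsLocalMin G t2) :
    (∃ s ∈ Set.Ioo t1 t2, Hg K L M N s = 0) ∨ (∀ t, Hg K L M N t = 0) := by
  have hdiff : Differentiable ℝ G := fun t => (hderiv t).differentiableAt
  obtain ⟨s, hsmem, hsmax⟩ := isCompact_Icc.exists_isMaxOn
    (Set.nonempty_Icc.mpr hlt.le) hdiff.continuous.continuousOn (f := G) (s := Set.Icc t1 t2)
  rcases eq_or_lt_of_le hsmem.1 with hs1 | hs1
  · -- s = t1 : G constant to the right of t1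
    right
    obtain ⟨ε, hε, hball⟩ := Metric.eventually_nhds_iff.mp h1
    set hi : ℝ := min (t1 + ε) t2 with hhi
    have hlohi : t1 < hi := lt_min (by linarith) hlt
    apply const_interval_allzero hderiv hlohi
    intro v hv
    have hvIcc : v ∈ Set.Icc t1 t2 := ⟨hv.1.le, hv.2.trans_le (min_le_right _ _) |>.le⟩
    have hle : G v ≤ G t1 := by
      have := hsmax hvIcc
      simpa [← hs1] using this
    have hge : G t1 ≤ G v := by
      apply hball
      have : v < t1 + ε := hv.2.trans_le (min_le_left _ _)
      rw [Real.dist_eq, abs_lt]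
      constructor <;> linarith [hv.1, hv.2]
    linarith
  rcases eq_or_lt_of_le hsmem.2 with hs2 | hs2
  · -- s = t2 : G constant to the left of t2
    right
    obtain ⟨ε, hε, hball⟩ := Metric.eventually_nhds_iff.mp h2
    set lo : ℝ := max (t2 - ε) t1 with hlo
    have hlohi : lo < t2 := max_lt (by linarith) hlt
    -- constant on Ioo lo t2, but const_interval_allzero wants G u = G lo; use value G t2? adjust:
    have hconst : ∀ v ∈ Set.Ioo lo t2, G v = G t2 := by
      intro v hv
      have hvIcc : v ∈ Set.Icc t1 t2 := ⟨(le_max_right _ _).trans hv.1.le, hv.2.le⟩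
      have hle : G v ≤ G t2 := by
        have := hsmax hvIcc
        simpa [hs2] using this
      have hge : G t2 ≤ G v := by
        apply hball
        have : t2 - ε < v := lt_of_le_of_lt (le_max_left _ _) hv.1
        rw [Real.dist_eq, abs_lt]
        constructor <;> linarith [hv.1, hv.2]
      linarith
    -- transfer: values on the open interval are all equal, pick midpoint as new lo
    set m : ℝ := (lo + t2)/2 with hm
    have hmmem : m ∈ Set.Ioo lo t2 := ⟨by simp only [hm]; linarith, by simp only [hm]; linarith⟩
    apply const_interval_allzero hderiv (show m < t2 from hmmem.2)
    intro v hv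
    rw [hconst v ⟨hmmem.1.trans hv.1, hv.2⟩, hconst m hmmem]
  · -- interior max
    left
    have hloc : IsLocalMax G s := hsmax.isLocalMax (Icc_mem_nhds hs1 hs2)
    exact ⟨s, ⟨hs1, hs2⟩, hloc.hasDerivAt_eq_zero (hderiv s)⟩

lemma three_mins (hderiv : ∀ t, HasDerivAt G (Hg K L M N t) t)
    {t1 t2 t3 : ℝ} (h12 : t1 < t2) (h23 : t2 < t3) (hwin : t3 - t1 < 2*Real.pi)
    (hm1 : IsLocalMin G t1) (hm2 : IsLocalMin G t2) (hm3 : IsLocalMin G t3)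
    (hnz : ¬ ∀ t, Hg K L M N t = 0) : False := by
  rcases between_mins hderiv h12 hm1 hm2 with ⟨s1, hs1, hz1⟩ | h
  · rcases between_mins hderiv h23 hm2 hm3 with ⟨s2, hs2, hz2⟩ | h
    · apply hnz
      apply Hg_allzero_of_five K L M N ![t1, s1, t2, s2, t3]
      · rw [Fin.strictMono_iff_lt_succ]
        intro i
        fin_cases i <;>
          simp [Fin.castSucc, Fin.succ] <;>
          first
            | exact hs1.1 | exact hs1.2 | exact hs2.1 | exact hs2.2
      · show t3 - t1 < 2*Real.pi
        exact hwin
      · intro i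
        fin_cases i <;> simp
        · exact hm1.hasDerivAt_eq_zero (hderiv t1)
        · exact hz1
        · exact hm2.hasDerivAt_eq_zero (hderiv t2)
        · exact hz2
        · exact hm3.hasDerivAt_eq_zero (hderiv t3)
    · exact hnz h
  · exact hnz h

variable {P : Matrix (Fin 2) (Fin 2) ℝ} {q : Fin 2 → ℝ} {r : ℝ}

lemma norm_gamma (hr : 0 < r) (t : ℝ) : euclNorm ![r * Real.cos t, r * Real.sin t] = r := by
  have : (r * Real.cos t) * (r * Real.cos t) + (r * Real.sin t) * (r * Real.sin t) = r^2 := by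
    have := Real.sin_sq_add_cos_sq t
    nlinarith
  simp only [euclNorm, dotProduct, Fin.sum_univ_two, Matrix.cons_val_zero,
    Matrix.cons_val_one, Matrix.head_cons]
  rw [this]
  exact Real.sqrt_sq hr.le

lemma continuous_gamma : Continuous (fun t : ℝ => ![r * Real.cos t, r * Real.sin t]) := by
  apply continuous_pi
  intro i
  fin_cases i <;> simp <;> fun_prop

lemma min_transfer (hP : P.IsSymm) (hr : 0 < r) {x : Fin 2 → ℝ} {t : ℝ}
    (hx : x = ![r * Real.cos t, r * Real.sin t])
    (hmin : IsLocalMinOn (qobj P q) {y | euclNorm y = r} x) :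
    IsLocalMin (Gfun (P 0 0) (P 0 1) (P 1 1) (q 0) (q 1) r) t := by
  set γ : ℝ → (Fin 2 → ℝ) := fun s => ![r * Real.cos s, r * Real.sin s] with hγ
  have htend : Filter.Tendsto γ (nhds t) (nhdsWithin x {y | euclNorm y = r}) := by
    rw [tendsto_nhdsWithin_iff]
    constructor
    · rw [hx]; exact continuous_gamma.tendsto t
    · exact Filter.Eventually.of_forall (fun s => norm_gamma hr s)
  have hev := htend.eventually hmin
  have hGs : ∀ s, qobj P q (γ s) = Gfun (P 0 0) (P 0 1) (P 1 1) (q 0) (q 1) r s := by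
    intro s
    rw [hγ]
    simp only
    rw [qobj_pair P hP q]
    rfl
  filter_upwards [hev] with s hs
  rw [← hGs s, ← hGs t]
  show qobj P q (γ t) ≤ qobj P q (γ s)
  rw [show γ t = x from hx.symm]
  exact hs

lemma no_three_mins (hP : P.IsSymm) (hr : 0 < r)
    (hnc : ¬ ∀ x y : Fin 2 → ℝ, euclNorm x = r → euclNorm y = r →
      qobj P q x = qobj P q y)
    (x1 x2 x3 : Fin 2 → ℝ) (h12 : x1 ≠ x2) (h13 : x1 ≠ x3) (h23 : x2 ≠ x3)
    (hn1 : euclNorm x1 = r) (hn2 : euclNorm x2 = r) (hn3 : euclNorm x3 = r)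
    (hm1 : IsLocalMinOn (qobj P q) {y | euclNorm y = r} x1)
    (hm2 : IsLocalMinOn (qobj P q) {y | euclNorm y = r} x2)
    (hm3 : IsLocalMinOn (qobj P q) {y | euclNorm y = r} x3) : False := by
  set a := P 0 0; set b := P 0 1; set c := P 1 1
  set K := (c-a)*r^2/2; set L := b*r^2; set M := -(q 0*r); set N := q 1*r
  set G := Gfun a b c (q 0) (q 1) r with hG
  have hderiv : ∀ t, HasDerivAt G (Hg K L M N t) t := fun t => hasDerivAt_G2 a b c (q 0) (q 1) r t
  -- nonconstancy of Hg
  have hnz : ¬ ∀ t, Hg K L M N t = 0 := by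
    intro hz
    apply hnc
    have hGconst : ∀ s t : ℝ, G s = G t := by
      have hdiff : Differentiable ℝ G := fun t => (hderiv t).differentiableAt
      intro s t
      apply is_const_of_deriv_eq_zero hdiff
      intro u
      rw [(hderiv u).deriv, hz u]
    intro x y hx hy
    obtain ⟨s, _, rfl⟩ := circle_param hr x hx
    obtain ⟨t, _, rfl⟩ := circle_param hr y hy
    have h1 : qobj P q ![r * Real.cos s, r * Real.sin s] = G s := by
      rw [qobj_pair P hP q]; rfl
    have h2 : qobj P q ![r * Real.cos t, r * Real.sin t] = G t := by
      rw [qobj_pair P hP q]; rfl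
    rw [h1, h2]; exact hGconst s t
  obtain ⟨t1, ht1mem, ht1⟩ := circle_param hr x1 hn1
  obtain ⟨t2, ht2mem, ht2⟩ := circle_param hr x2 hn2
  obtain ⟨t3, ht3mem, ht3⟩ := circle_param hr x3 hn3
  have hl1 : IsLocalMin G t1 := min_transfer hP hr ht1 hm1
  have hl2 : IsLocalMin G t2 := min_transfer hP hr ht2 hm2
  have hl3 : IsLocalMin G t3 := min_transfer hP hr ht3 hm3
  have hne12 : t1 ≠ t2 := by rintro rfl; exact h12 (ht1.trans ht2.symm)
  have hne13 : t1 ≠ t3 := by rintro rfl; exact h13 (ht1.trans ht3.symm)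
  have hne23 : t2 ≠ t3 := by rintro rfl; exact h23 (ht2.trans ht3.symm)
  have hpi := Real.pi_pos
  have main : ∀ s1 s2 s3 : ℝ, s1 ∈ Set.Ioc (-Real.pi) Real.pi →
      s3 ∈ Set.Ioc (-Real.pi) Real.pi → s1 < s2 → s2 < s3 →
      IsLocalMin G s1 → IsLocalMin G s2 → IsLocalMin G s3 → False := by
    intro s1 s2 s3 hs1 hs3 h12' h23' hm1' hm2' hm3'
    exact three_mins hderiv h12' h23' (by cases hs1; cases hs3; linarith) hm1' hm2' hm3' hnz
  rcases lt_trichotomy t1 t2 with h12' | h12' | h12'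
  · rcases lt_trichotomy t2 t3 with h23' | h23' | h23'
    · exact main t1 t2 t3 ht1mem ht3mem h12' h23' hl1 hl2 hl3
    · exact hne23 h23'
    · rcases lt_trichotomy t1 t3 with h13' | h13' | h13'
      · exact main t1 t3 t2 ht1mem ht2mem h13' h23' hl1 hl3 hl2
      · exact hne13 h13'
      · exact main t3 t1 t2 ht3mem ht2mem h13' h12' hl3 hl1 hl2
  · exact hne12 h12'
  · rcases lt_trichotomy t1 t3 with h13' | h13' | h13'
    · exact main t2 t1 t3 ht2mem ht3mem h12' h13' hl2 hl1 hl3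
    · exact hne13 h13'
    · rcases lt_trichotomy t2 t3 with h23' | h23' | h23'
      · exact main t2 t3 t1 ht2mem ht1mem h23' h13' hl2 hl3 hl1
      · exact hne23 h23'
      · exact main t3 t2 t1 ht3mem ht1mem h23' h12' hl3 hl2 hl1

lemma atMostTwoMin (hP : P.IsSymm) (hr : 0 < r)
    (hnc : ¬ ∀ x y : Fin 2 → ℝ, euclNorm x = r → euclNorm y = r →
      qobj P q x = qobj P q y) :
    ∃ a b : Fin 2 → ℝ, ∀ x : Fin 2 → ℝ, euclNorm x = r →
      IsLocalMinOn (qobj P q) {y | euclNorm y = r} x → x = a ∨ x = b := by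
  by_cases h1 : ∃ x : Fin 2 → ℝ, euclNorm x = r ∧
      IsLocalMinOn (qobj P q) {y | euclNorm y = r} x
  · obtain ⟨a, hna, hma⟩ := h1
    by_cases h2 : ∃ y : Fin 2 → ℝ, (euclNorm y = r ∧
        IsLocalMinOn (qobj P q) {z | euclNorm z = r} y) ∧ y ≠ a
    · obtain ⟨b, ⟨hnb, hmb⟩, hba⟩ := h2
      refine ⟨a, b, fun x hnx hmx => ?_⟩
      by_contra hcon
      push_neg at hcon
      exact no_three_mins hP hr hnc a b x (Ne.symm hba) (Ne.symm hcon.1) (Ne.symm hcon.2)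
        hna hnb hnx hma hmb hmx
    · push_neg at h2
      exact ⟨a, a, fun x hnx hmx => Or.inl (by
        by_contra hxa
        exact hxa (h2 x ⟨hnx, hmx⟩))⟩
  · push_neg at h1
    exact ⟨0, 0, fun x hnx hmx => absurd hmx (by
      intro h
      exact (h1 x hnx) h)⟩


end Aux

/-- a two-dimensional trust-region problem either has constant objective on
the circle, or has at most 2 local minimizers and at most 2 local maximizers on the
circle. -/
theorem stmt_15 (P : Matrix (Fin 2) (Fin 2) ℝ) (hP : P.IsSymm)
    (q : Fin 2 → ℝ) (r : ℝ) (hr : 0 < r) :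
    (∀ x y : Fin 2 → ℝ, euclNorm x = r → euclNorm y = r → qobj P q x = qobj P q y)
    ∨ ((∃ a b : Fin 2 → ℝ, ∀ x : Fin 2 → ℝ, euclNorm x = r →
          IsLocalMinOn (qobj P q) {y | euclNorm y = r} x → x = a ∨ x = b)
        ∧ (∃ a b : Fin 2 → ℝ, ∀ x : Fin 2 → ℝ, euclNorm x = r →
          IsLocalMaxOn (qobj P q) {y | euclNorm y = r} x → x = a ∨ x = b)) := by
  by_cases hconst : ∀ x y : Fin 2 → ℝ, euclNorm x = r → euclNorm y = r →
      qobj P q x = qobj P q y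
  · exact Or.inl hconst
  · right
    constructor
    · exact atMostTwoMin hP hr hconst
    · have hPn : (-P).IsSymm := by
        rw [Matrix.IsSymm, Matrix.transpose_neg, hP.eq]
      have hqeq : ∀ x, qobj (-P) (-q) x = -(qobj P q x) := by
        intro x
        simp only [qobj, Matrix.neg_mulVec, dotProduct_neg, neg_dotProduct]
        ring
      have hnc' : ¬ ∀ x y : Fin 2 → ℝ, euclNorm x = r → euclNorm y = r →
          qobj (-P) (-q) x = qobj (-P) (-q) y := by
        intro h
        apply hconst
        intro x y hx hy
        have := h x y hx hy
        rw [hqeq, hqeq] at this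
        linarith
      obtain ⟨a, b, hab⟩ := atMostTwoMin hPn hr hnc'
      refine ⟨a, b, fun x hnx hmax => hab x hnx ?_⟩
      have hm : ∀ᶠ y in nhdsWithin x {y | euclNorm y = r}, qobj P q y ≤ qobj P q x := hmax
      have : ∀ᶠ y in nhdsWithin x {y | euclNorm y = r},
          qobj (-P) (-q) x ≤ qobj (-P) (-q) y := by
        filter_upwards [hm] with y hy
        rw [hqeq, hqeq]
        linarith
      exact this
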